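/- Consider a d-layer ReLU network G with weight matrices W_i ∈ ℝ^{n_i×n_{i−1}} and assume n_i ≥ k for all i ∈ [d]. Then for every i ∈ [d], the range of the sub-network G_i is contained in a union of at most Ψ_i = ∏_{j=1}^{i}(e n_j/k)^k affine subspaces of dimension k in ℝ^{n_i}; that is, range(G_i) ⊆ ∪_{j∈[Ψ_i]} S_{i,j} where each S_{i,j} is a k-dimensional affine subspace of ℝ^{n_i}. -/

import Mathlib

open scoped BigOperators
open Real MeasureTheory ProbabilityTheory Filter
open scoped Matrix

noncomputable section

namespace R2WDCFormal

/-- Euclidean inner product on `Fin n → ℝ`. -/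
def dotp {n : ℕ} (r s : Fin n → ℝ) : ℝ := ∑ i, r i * s i

/-- Euclidean norm on `Fin n → ℝ`. -/
def vnorm {n : ℕ} (r : Fin n → ℝ) : ℝ := Real.sqrt (dotp r r)

/-- Angle between two vectors. -/
def ang {n : ℕ} (r s : Fin n → ℝ) : ℝ := Real.arccos (dotp r s / (vnorm r * vnorm s))

/-- Outer product of two vectors, as a matrix. -/
def outer {n : ℕ} (u v : Fin n → ℝ) : Matrix (Fin n) (Fin n) ℝ := Matrix.of fun i j => u i * v j

/-- The matrix sending `r̂ ↦ ŝ`, `ŝ ↦ r̂` with kernel `span{r,s}ᗮ`. -/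
def Mswap {n : ℕ} (r s : Fin n → ℝ) : Matrix (Fin n) (Fin n) ℝ :=
  outer ((vnorm ((vnorm r)⁻¹ • r + (vnorm s)⁻¹ • s))⁻¹ • ((vnorm r)⁻¹ • r + (vnorm s)⁻¹ • s))
        ((vnorm ((vnorm r)⁻¹ • r + (vnorm s)⁻¹ • s))⁻¹ • ((vnorm r)⁻¹ • r + (vnorm s)⁻¹ • s)) -
  outer ((vnorm ((vnorm r)⁻¹ • r - (vnorm s)⁻¹ • s))⁻¹ • ((vnorm r)⁻¹ • r - (vnorm s)⁻¹ • s))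
        ((vnorm ((vnorm r)⁻¹ • r - (vnorm s)⁻¹ • s))⁻¹ • ((vnorm r)⁻¹ • r - (vnorm s)⁻¹ • s))

/-- The matrix `Q_{r,s}`. -/
def Qmat {n : ℕ} (r s : Fin n → ℝ) : Matrix (Fin n) (Fin n) ℝ :=
  if r = 0 ∨ s = 0 then 0
  else ((π - ang r s) / (2 * π)) • (1 : Matrix (Fin n) (Fin n) ℝ) +
    (Real.sin (ang r s) / (2 * π)) • Mswap r s

/-- `W_{+,x} = diag(Wx > 0) W`. -/
def Wplus {m n : ℕ} (W : Matrix (Fin m) (Fin n) ℝ) (x : Fin n → ℝ) : Matrix (Fin m) (Fin n) ℝ :=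
  Matrix.of fun i j => if 0 < W.mulVec x i then W i j else 0

/-- Entrywise ReLU. -/
def reluVec {n : ℕ} (v : Fin n → ℝ) : Fin n → ℝ := fun i => max (v i) 0

/-- Sub-network `G_j` of the ReLU network with layer sizes `nn` and weights `W`. -/
def subnet (nn : ℕ → ℕ) (W : ∀ i : ℕ, Matrix (Fin (nn (i + 1))) (Fin (nn i)) ℝ) :
    ∀ j : ℕ, (Fin (nn 0) → ℝ) → Fin (nn j) → ℝ
  | 0, x => x
  | j + 1, x => reluVec ((W j).mulVec (subnet nn W j x))

/-- `Λ_{j,x} = W_{j,+,x} ⋯ W_{1,+,x}`. -/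
def LambdaMat (nn : ℕ → ℕ) (W : ∀ i : ℕ, Matrix (Fin (nn (i + 1))) (Fin (nn i)) ℝ) :
    ∀ j : ℕ, (Fin (nn 0) → ℝ) → Matrix (Fin (nn j)) (Fin (nn 0)) ℝ
  | 0, _ => 1
  | j + 1, x => Wplus (W j) (subnet nn W j x) * LambdaMat nn W j x

/-- Range Restricted Weight Distribution Condition with constant `ε` of a `d`-layer network. -/
def R2WDCond (nn : ℕ → ℕ) (d : ℕ)
    (W : ∀ i : ℕ, Matrix (Fin (nn (i + 1))) (Fin (nn i)) ℝ) (ε : ℝ) : Prop :=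
  ∀ i < d, ∀ x y x₁ x₂ x₃ x₄ : Fin (nn 0) → ℝ,
    |dotp (((Wplus (W i) (subnet nn W i x))ᵀ * Wplus (W i) (subnet nn W i y) -
        Qmat (subnet nn W i x) (subnet nn W i y)).mulVec
        (subnet nn W i x₁ - subnet nn W i x₂)) (subnet nn W i x₃ - subnet nn W i x₄)| ≤
      ε * vnorm (subnet nn W i x₁ - subnet nn W i x₂) * vnorm (subnet nn W i x₃ - subnet nn W i x₄)

/-- Range Restricted Isometry Condition of `A` with respect to the network, with constant `ε`. -/
def RRICond (nn : ℕ → ℕ) (d : ℕ)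
    (W : ∀ i : ℕ, Matrix (Fin (nn (i + 1))) (Fin (nn i)) ℝ) {mm : ℕ}
    (A : Matrix (Fin mm) (Fin (nn d)) ℝ) (ε : ℝ) : Prop :=
  ∀ x₁ x₂ x₃ x₄ : Fin (nn 0) → ℝ,
    |dotp ((Aᵀ * A - 1).mulVec (subnet nn W d x₁ - subnet nn W d x₂))
        (subnet nn W d x₃ - subnet nn W d x₄)| ≤
      ε * vnorm (subnet nn W d x₁ - subnet nn W d x₂) * vnorm (subnet nn W d x₃ - subnet nn W d x₄)

/-- The angle-distortion function `g`. -/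
def gAngle (θ : ℝ) : ℝ := Real.arccos (((π - θ) * Real.cos θ + Real.sin θ) / π)

/-- The deterministic vector field `h̃_{x,y}`. -/
def htilde {k : ℕ} (d : ℕ) (x y : Fin k → ℝ) : Fin k → ℝ :=
  (1 / 2 ^ d : ℝ) • ((∏ i ∈ Finset.range d, (π - gAngle^[i] (ang x y)) / π) • y +
    (∑ i ∈ Finset.Ico 1 d, Real.sin (gAngle^[i] (ang x y)) / π *
      ∏ j ∈ Finset.Ico (i + 1) d, (π - gAngle^[j] (ang x y)) / π) •
      (vnorm y • (vnorm x)⁻¹ • x))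

/-- Spectral (ℓ²-operator) norm of a matrix. -/
def specNorm {a b : ℕ} (M : Matrix (Fin a) (Fin b) ℝ) : ℝ :=
  ⨆ v : {v : Fin b → ℝ // vnorm v ≤ 1}, vnorm (M.mulVec v)

/-- The entries of the random matrix `W` are i.i.d. `N(0, v)`. -/
def IIDGaussian {Ω : Type*} [MeasurableSpace Ω] (μ : Measure Ω) {a b : ℕ}
    (W : Ω → Fin a → Fin b → ℝ) (v : NNReal) : Prop :=
  Measure.map W μ = Measure.pi fun _ : Fin a => Measure.pi fun _ : Fin b => gaussianReal 0 v

/-- The noise factor `ω`. -/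
def omegaNoise (nn : ℕ → ℕ) (d mm : ℕ) : ℝ :=
  2 / 2 ^ ((d : ℝ) / 2) * Real.sqrt (13 / 12) *
    Real.sqrt ((nn 0 : ℝ) / mm * Real.log (5 * ∏ j ∈ Finset.Icc 1 d, Real.exp 1 * nn j / nn 0))

/-- Clarke subdifferential of `f` at `x`: the convex hull of all limits of gradients of `f`
at nearby differentiability points. -/
def clarkeSubdiff {k : ℕ} (f : (Fin k → ℝ) → ℝ) (x : Fin k → ℝ) : Set (Fin k → ℝ) :=
  convexHull ℝ {v : Fin k → ℝ | ∃ u : ℕ → Fin k → ℝ,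
    (∀ t, DifferentiableAt ℝ f (u t)) ∧
    Tendsto u atTop (nhds x) ∧
    Tendsto (fun t => fun i => fderiv ℝ f (u t) (Pi.single i 1)) atTop (nhds v)}

/-- The compressed sensing objective `f_cs`. -/
def fcs (nn : ℕ → ℕ) (d : ℕ) (W : ∀ i : ℕ, Matrix (Fin (nn (i + 1))) (Fin (nn i)) ℝ)
    {mm : ℕ} (A : Matrix (Fin mm) (Fin (nn d)) ℝ) (b : Fin mm → ℝ)
    (x : Fin (nn 0) → ℝ) : ℝ :=
  1 / 2 * vnorm (b - A.mulVec (subnet nn W d x)) ^ 2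



open Module

/-- The set of strict sign patterns realized by affine functionals `x ↦ L t x + c t`. -/
def pats {V : Type*} [AddCommGroup V] [Module ℝ V] {n : ℕ}
    (L : Fin n → V →ₗ[ℝ] ℝ) (c : Fin n → ℝ) : Set (Finset (Fin n)) :=
  {A | ∃ x : V, ∀ t, t ∈ A ↔ 0 < L t x + c t}

lemma sum_choose_succ_left (n k : ℕ) :
    ∑ i ∈ Finset.range (k + 1), (n + 1).choose i =
      ∑ i ∈ Finset.range (k + 1), n.choose i + ∑ i ∈ Finset.range k, n.choose i := by
  induction k with
  | zero => simp
  | succ k ih =>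
      have e1 := Finset.sum_range_succ (fun i => (n + 1).choose i) (k + 1)
      have e2 := Finset.sum_range_succ (fun i => n.choose i) (k + 1)
      have e3 := Finset.sum_range_succ (fun i => n.choose i) k
      have h2 : (n + 1).choose (k + 1) = n.choose k + n.choose (k + 1) := by
        rw [Nat.choose_succ_succ]
      omega

lemma comb {V : Type*} [AddCommGroup V] [Module ℝ V] (g : V →ₗ[ℝ] ℝ) (xm xp : V)
    (a b r : ℝ) (hs : a - b ≠ 0) :
    g ((a / (a - b)) • xm + (-b / (a - b)) • xp) + r
      = (a / (a - b)) * (g xm + r) + (-b / (a - b)) * (g xp + r) := by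
  have h1 : g ((a / (a - b)) • xm + (-b / (a - b)) • xp)
      = a / (a - b) * g xm + -b / (a - b) * g xp := by
    simp only [_root_.map_add, _root_.map_smul, smul_eq_mul]
  have hcoeff : a / (a - b) + -b / (a - b) = 1 := by
    rw [← add_div, ← sub_eq_add_neg]; exact div_self hs
  linear_combination h1 - r * hcoeff

lemma pair_mem {V : Type*} [AddCommGroup V] [Module ℝ V] {n : ℕ}
    (L : Fin (n + 1) → V →ₗ[ℝ] ℝ) (c : Fin (n + 1) → ℝ)
    (A B : Finset (Fin (n + 1))) (xp xm : V)
    (hxp : ∀ t, t ∈ A ↔ 0 < L t xp + c t) (hxm : ∀ t, t ∈ B ↔ 0 < L t xm + c t)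
    (hlA : Fin.last n ∈ A) (hlB : Fin.last n ∉ B)
    (hAB : ∀ t : Fin n, t.castSucc ∈ A ↔ t.castSucc ∈ B) :
    ∃ z : V, L (Fin.last n) z + c (Fin.last n) = 0 ∧
      ∀ t : Fin n, t.castSucc ∈ A ↔ 0 < L t.castSucc z + c t.castSucc := by
  obtain ⟨a, hadef⟩ : ∃ a', a' = L (Fin.last n) xp + c (Fin.last n) := ⟨_, rfl⟩
  obtain ⟨b, hbdef⟩ : ∃ b', b' = L (Fin.last n) xm + c (Fin.last n) := ⟨_, rfl⟩
  have ha : 0 < a := by rw [hadef]; exact (hxp (Fin.last n)).mp hlA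
  have hb : b ≤ 0 := by
    rw [hbdef]
    by_contra h
    push_neg at h
    exact hlB ((hxm (Fin.last n)).mpr h)
  have hs : 0 < a - b := by linarith
  have hs' : a - b ≠ 0 := ne_of_gt hs
  refine ⟨(a / (a - b)) • xm + (-b / (a - b)) • xp, ?_, ?_⟩
  · rw [comb _ xm xp a b _ hs', ← hadef, ← hbdef, div_mul_eq_mul_div, div_mul_eq_mul_div,
      ← add_div, show a * b + -b * a = 0 by ring]
    exact zero_div _
  · intro t
    rw [comb _ xm xp a b _ hs']
    have c1 : 0 < a / (a - b) := by positivity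
    have c2 : 0 ≤ -b / (a - b) := div_nonneg (by linarith) (by linarith)
    constructor
    · intro htA
      have h1 : 0 < L t.castSucc xm + c t.castSucc := (hxm t.castSucc).mp ((hAB t).mp htA)
      have h2 : 0 < L t.castSucc xp + c t.castSucc := (hxp t.castSucc).mp htA
      exact add_pos_of_pos_of_nonneg (mul_pos c1 h1) (mul_nonneg c2 h2.le)
    · intro hpos
      by_contra htA
      have h1 : L t.castSucc xm + c t.castSucc ≤ 0 := by
        by_contra h; push_neg at h
        exact htA ((hAB t).mpr ((hxm t.castSucc).mpr h))
      have h2 : L t.castSucc xp + c t.castSucc ≤ 0 := by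
        by_contra h; push_neg at h
        exact htA ((hxp t.castSucc).mpr h)
      have t1 : a / (a - b) * (L t.castSucc xm + c t.castSucc) ≤ 0 :=
        mul_nonpos_iff.mpr (Or.inl ⟨c1.le, h1⟩)
      have t2 : -b / (a - b) * (L t.castSucc xp + c t.castSucc) ≤ 0 :=
        mul_nonpos_iff.mpr (Or.inl ⟨c2, h2⟩)
      linarith

lemma pats_card (n : ℕ) :
    ∀ (V : Type) [AddCommGroup V] [Module ℝ V] [FiniteDimensional ℝ V]
      (L : Fin n → V →ₗ[ℝ] ℝ) (c : Fin n → ℝ),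
      (pats L c).ncard ≤ ∑ i ∈ Finset.range (finrank ℝ V + 1), n.choose i := by
  induction n with
  | zero =>
      intro V _ _ _ L c
      have h1 : pats L c ⊆ {(∅ : Finset (Fin 0))} := by
        intro A _; simp [Finset.eq_empty_of_isEmpty A]
      calc (pats L c).ncard ≤ ({(∅ : Finset (Fin 0))} : Set (Finset (Fin 0))).ncard :=
            Set.ncard_le_ncard h1 (Set.toFinite _)
        _ = 1 := Set.ncard_singleton _
        _ ≤ _ := by
            have : 0 ∈ Finset.range (finrank ℝ V + 1) := by simp
            calc 1 = Nat.choose 0 0 := rfl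
              _ ≤ _ := Finset.single_le_sum (f := fun i => Nat.choose 0 i)
                  (fun _ _ => Nat.zero_le _) this
  | succ n ih =>
      intro V _ _ _ L c
      classical
      set k := finrank ℝ V with hkdef
      set ℓ : V →ₗ[ℝ] ℝ := L (Fin.last n) with hℓdef
      set dd : ℝ := c (Fin.last n) with hdddef
      set L' : Fin n → V →ₗ[ℝ] ℝ := fun t => L t.castSucc with hL'def
      set c' : Fin n → ℝ := fun t => c t.castSucc with hc'def
      set f : Finset (Fin (n + 1)) → Finset (Fin n) :=
        fun A => Finset.univ.filter (fun t => t.castSucc ∈ A) with hfdef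
      have hmemf : ∀ (A : Finset (Fin (n+1))) (t : Fin n), t ∈ f A ↔ t.castSucc ∈ A := by
        intro A t; simp [hfdef]
      set Pp : Set (Finset (Fin (n+1))) := {A ∈ pats L c | Fin.last n ∈ A} with hPp
      set Pm : Set (Finset (Fin (n+1))) := {A ∈ pats L c | Fin.last n ∉ A} with hPm
      have hPunion : pats L c ⊆ Pp ∪ Pm := by
        intro A hA; by_cases h : Fin.last n ∈ A
        · exact Or.inl ⟨hA, h⟩
        · exact Or.inr ⟨hA, h⟩
      have hinjp : Set.InjOn f Pp := by
        intro A hA B hB hAB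
        ext t
        induction t using Fin.lastCases with
        | last => simp [hA.2, hB.2]
        | cast t =>
            have := congrArg (t ∈ ·) hAB
            simpa [hmemf] using this
      have hinjm : Set.InjOn f Pm := by
        intro A hA B hB hAB
        ext t
        induction t using Fin.lastCases with
        | last => simp [hA.2, hB.2]
        | cast t =>
            have := congrArg (t ∈ ·) hAB
            simpa [hmemf] using this
      have himg : ∀ A ∈ pats L c, f A ∈ pats L' c' := by
        rintro A ⟨x, hx⟩
        exact ⟨x, fun t => by rw [hmemf]; exact hx t.castSucc⟩
      have himgp : f '' Pp ⊆ pats L' c' := by rintro _ ⟨A, hA, rfl⟩; exact himg A hA.1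
      have himgm : f '' Pm ⊆ pats L' c' := by rintro _ ⟨A, hA, rfl⟩; exact himg A hA.1
      -- bound on the intersection
      have hinter : (f '' Pp ∩ f '' Pm).ncard ≤ ∑ i ∈ Finset.range k, n.choose i := by
        by_cases hzero : ℓ = 0
        · have : f '' Pp ∩ f '' Pm = ∅ := by
            ext A'
            simp only [Set.mem_inter_iff, Set.mem_empty_iff_false, iff_false]
            rintro ⟨⟨A, ⟨⟨x, hx⟩, hlA⟩, rfl⟩, ⟨B, ⟨⟨y, hy⟩, hlB⟩, hBA⟩⟩
            have h1 : 0 < ℓ x + dd := (hx (Fin.last n)).mp hlA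
            have h2 : ¬ 0 < ℓ y + dd := fun h => hlB ((hy (Fin.last n)).mpr h)
            rw [hzero] at h1 h2
            simp only [LinearMap.zero_apply, zero_add] at h1 h2
            exact h2 h1
          simp [this]
        · -- ℓ ≠ 0
          obtain ⟨w, hw⟩ : ∃ w : V, ℓ w ≠ 0 := by
            by_contra h
            push_neg at h
            exact hzero (LinearMap.ext fun x => by simpa using h x)
          set x₀ : V := (-dd / ℓ w) • w with hx₀def
          have hx₀ : ℓ x₀ = -dd := by
            rw [hx₀def, _root_.map_smul, smul_eq_mul, div_mul_cancel₀ _ hw]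
          set K := LinearMap.ker ℓ with hKdef
          set M : Fin n → K →ₗ[ℝ] ℝ := fun t => (L' t).comp K.subtype with hMdef
          set e : Fin n → ℝ := fun t => c' t + L' t x₀ with hedef
          have hsub : f '' Pp ∩ f '' Pm ⊆ pats M e := by
            rintro A' ⟨⟨A, ⟨⟨xp, hxp⟩, hlA⟩, rfl⟩, ⟨B, ⟨⟨xm, hxm⟩, hlB⟩, hBA⟩⟩
            have hAB : ∀ t : Fin n, t.castSucc ∈ A ↔ t.castSucc ∈ B := by
              intro t
              rw [← hmemf A t, ← hmemf B t, hBA]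
            obtain ⟨z, hz0, hziff⟩ := pair_mem L c A B xp xm hxp hxm hlA hlB hAB
            have hzK : z - x₀ ∈ K := by
              rw [hKdef, LinearMap.mem_ker, _root_.map_sub, hx₀]
              rw [← hℓdef, ← hdddef] at hz0
              linarith
            refine ⟨⟨z - x₀, hzK⟩, fun t => ?_⟩
            have hMe : M t ⟨z - x₀, hzK⟩ + e t = L t.castSucc z + c t.castSucc := by
              simp only [hMdef, hedef, hL'def, hc'def, LinearMap.comp_apply,
                Submodule.subtype_apply, _root_.map_sub]
              ring
            rw [hMe, hmemf A t]
            exact hziff t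
          have hK1 : finrank ℝ K + 1 = k := by
            have hr : LinearMap.range ℓ = ⊤ := by
              rw [LinearMap.range_eq_top]
              intro r
              exact ⟨(r / ℓ w) • w, by rw [_root_.map_smul, smul_eq_mul, div_mul_cancel₀ _ hw]⟩
            have := LinearMap.finrank_range_add_finrank_ker ℓ
            rw [hr, finrank_top] at this
            simp only [Module.finrank_self] at this
            rw [hKdef]
            omega
          calc (f '' Pp ∩ f '' Pm).ncard ≤ (pats M e).ncard :=
                Set.ncard_le_ncard hsub (Set.toFinite _)
            _ ≤ ∑ i ∈ Finset.range (finrank ℝ K + 1), n.choose i := ih K M e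
            _ = ∑ i ∈ Finset.range k, n.choose i := by rw [hK1]
      -- assemble
      have step1 : (pats L c).ncard ≤ Pp.ncard + Pm.ncard := by
        calc (pats L c).ncard ≤ (Pp ∪ Pm).ncard :=
              Set.ncard_le_ncard hPunion (Set.toFinite _)
          _ ≤ Pp.ncard + Pm.ncard := Set.ncard_union_le _ _
      have step2 : Pp.ncard + Pm.ncard =
          (f '' Pp ∪ f '' Pm).ncard + (f '' Pp ∩ f '' Pm).ncard := by
        rw [← Set.ncard_image_of_injOn hinjp, ← Set.ncard_image_of_injOn hinjm]
        rw [Set.ncard_union_add_ncard_inter]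
      have step3 : (f '' Pp ∪ f '' Pm).ncard ≤ ∑ i ∈ Finset.range (k + 1), n.choose i := by
        calc (f '' Pp ∪ f '' Pm).ncard ≤ (pats L' c').ncard :=
              Set.ncard_le_ncard (Set.union_subset himgp himgm) (Set.toFinite _)
          _ ≤ _ := by
              have := ih V L' c'
              rwa [← hkdef] at this
      calc (pats L c).ncard
          ≤ (f '' Pp ∪ f '' Pm).ncard + (f '' Pp ∩ f '' Pm).ncard := by
            rw [← step2]; exact step1
        _ ≤ (∑ i ∈ Finset.range (k + 1), n.choose i) + ∑ i ∈ Finset.range k, n.choose i :=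
            Nat.add_le_add step3 hinter
        _ = ∑ i ∈ Finset.range (k + 1), (n + 1).choose i := (sum_choose_succ_left n k).symm



lemma exists_enum {α : Type*} [Nonempty α] (s : Set α) (hs : s.Finite) {M : ℕ}
    (h : s.ncard ≤ M) : ∃ φ : Fin M → α, ∀ a ∈ s, ∃ m, φ m = a := by
  classical
  set l := hs.toFinset.toList with hl
  refine ⟨fun m => l.getD m (Classical.arbitrary α), fun a ha => ?_⟩
  have hmem : a ∈ l := by
    rw [hl, Finset.mem_toList, Set.Finite.mem_toFinset]
    exact ha
  obtain ⟨i, hi, hEl⟩ := List.mem_iff_getElem.mp hmem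
  have hlen : l.length ≤ M := by
    rw [hl, Finset.length_toList, ← Set.ncard_eq_toFinset_card s hs]
    exact h
  refine ⟨⟨i, lt_of_lt_of_le hi hlen⟩, ?_⟩
  simp only [List.getD_eq_getElem?_getD, List.getElem?_eq_getElem hi]
  simpa using hEl

lemma sub_ext {V : Type*} [AddCommGroup V] [Module ℝ V] [FiniteDimensional ℝ V]
    (U₀ : Submodule ℝ V) {k : ℕ} (h1 : finrank ℝ U₀ ≤ k) (h2 : k ≤ finrank ℝ V) :
    ∃ U : Submodule ℝ V, U₀ ≤ U ∧ finrank ℝ U = k := by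
  classical
  suffices H : ∀ j (U₀ : Submodule ℝ V), finrank ℝ U₀ + j = k →
      ∃ U : Submodule ℝ V, U₀ ≤ U ∧ finrank ℝ U = k by
    exact H (k - finrank ℝ U₀) U₀ (by omega)
  intro j
  induction j with
  | zero => intro U₀ h; exact ⟨U₀, le_rfl, by omega⟩
  | succ j ihj =>
      intro U₀ h
      have hlt : finrank ℝ U₀ < finrank ℝ V := by omega
      obtain ⟨m, hm⟩ := Submodule.exists_of_finrank_lt U₀ hlt
      have hm1 : m ∉ U₀ := by
        have := hm 1 one_ne_zero
        simpa using this
      have hm0 : m ≠ 0 := by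
        intro h0
        exact hm1 (h0 ▸ U₀.zero_mem)
      have hinf : U₀ ⊓ Submodule.span ℝ {m} = ⊥ := by
        rw [eq_bot_iff]
        rintro y ⟨hy1, hy2⟩
        obtain ⟨r, rfl⟩ := Submodule.mem_span_singleton.mp hy2
        rcases eq_or_ne r 0 with rfl | hr
        · simp
        · exact absurd hy1 (hm r hr)
      have hrank : finrank ℝ ↥(U₀ ⊔ Submodule.span ℝ {m}) = finrank ℝ U₀ + 1 := by
        have := Submodule.finrank_sup_add_finrank_inf_eq U₀ (Submodule.span ℝ {m})
        rw [hinf, finrank_bot, finrank_span_singleton hm0] at this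
        omega
      obtain ⟨U, hU1, hU2⟩ := ihj (U₀ ⊔ Submodule.span ℝ {m}) (by omega)
      exact ⟨U, le_trans le_sup_left hU1, hU2⟩

lemma sum_choose_le_real (k n : ℕ) (hkn : k ≤ n) :
    ((∑ i ∈ Finset.range (k + 1), n.choose i : ℕ) : ℝ) ≤ (Real.exp 1 * n / k) ^ k := by
  rcases Nat.eq_zero_or_pos k with rfl | hk
  · simp
  have hn : 0 < n := lt_of_lt_of_le hk hkn
  have hnR : (0 : ℝ) < n := by exact_mod_cast hn
  have hkR : (0 : ℝ) < k := by exact_mod_cast hk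
  set t : ℝ := k / n with htdef
  have ht0 : 0 < t := by positivity
  have ht1 : t ≤ 1 := by
    rw [htdef, div_le_one hnR]
    exact_mod_cast hkn
  have key1 : ((∑ i ∈ Finset.range (k + 1), n.choose i : ℕ) : ℝ) * t ^ k ≤
      ∑ i ∈ Finset.range (k + 1), (n.choose i : ℝ) * t ^ i := by
    push_cast
    rw [Finset.sum_mul]
    apply Finset.sum_le_sum
    intro i hi
    have hik : i ≤ k := by
      have := Finset.mem_range.mp hi; omega
    have : t ^ k ≤ t ^ i := pow_le_pow_of_le_one ht0.le ht1 hik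
    have hc : (0:ℝ) ≤ (n.choose i : ℝ) := by positivity
    exact mul_le_mul_of_nonneg_left this hc
  have key2 : ∑ i ∈ Finset.range (k + 1), (n.choose i : ℝ) * t ^ i ≤ (1 + t) ^ n := by
    have hexp : (t + 1) ^ n = ∑ i ∈ Finset.range (n + 1), t ^ i * 1 ^ (n - i) * (n.choose i : ℝ) :=
      add_pow t 1 n
    have : ∑ i ∈ Finset.range (k + 1), (n.choose i : ℝ) * t ^ i ≤
        ∑ i ∈ Finset.range (n + 1), (n.choose i : ℝ) * t ^ i := by
      apply Finset.sum_le_sum_of_subset_of_nonneg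
      · exact Finset.range_subset_range.mpr (by omega)
      · intro i _ _; positivity
    refine le_trans this ?_
    rw [show (1 + t) ^ n = (t + 1) ^ n by ring_nf, hexp]
    apply le_of_eq
    apply Finset.sum_congr rfl
    intro i _
    rw [one_pow]
    ring
  have key3 : (1 + t) ^ n ≤ Real.exp 1 ^ k := by
    have h1 : (1 + t) ^ n ≤ Real.exp t ^ n := by
      apply pow_le_pow_left₀ (by positivity)
      linarith [Real.add_one_le_exp t]
    have h2 : Real.exp t ^ n = Real.exp (n * t) := (Real.exp_nat_mul t n).symm
    have h3 : (n : ℝ) * t = k := by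
      rw [htdef]
      field_simp
    rw [h2, h3] at h1
    have h4 : Real.exp (k : ℝ) = Real.exp 1 ^ k := by
      rw [← Real.exp_nat_mul, mul_one]
    rwa [h4] at h1
  have hfin : ((∑ i ∈ Finset.range (k + 1), n.choose i : ℕ) : ℝ) * t ^ k ≤ Real.exp 1 ^ k :=
    le_trans key1 (le_trans key2 key3)
  have htk : (0:ℝ) < t ^ k := by positivity
  rw [show Real.exp 1 * n / k = Real.exp 1 * (n / k) by ring, mul_pow]
  have hinv : ((n : ℝ) / k) ^ k = (t ^ k)⁻¹ := by
    rw [htdef, ← inv_div, inv_pow]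
  rw [hinv, ← div_eq_mul_inv, le_div_iff₀ htk]
  exact hfin

theorem statement2 (nn : ℕ → ℕ) (d : ℕ)
    (W : ∀ i : ℕ, Matrix (Fin (nn (i + 1))) (Fin (nn i)) ℝ)
    (hk : ∀ i, 1 ≤ i → i ≤ d → nn 0 ≤ nn i) :
    ∀ i, 1 ≤ i → i ≤ d →
      ∃ (N : ℕ) (S : Fin N → AffineSubspace ℝ (Fin (nn i) → ℝ)),
        (N : ℝ) ≤ ∏ j ∈ Finset.Icc 1 i, (Real.exp 1 * nn j / nn 0) ^ (nn 0) ∧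
        (∀ j, (S j : Set (Fin (nn i) → ℝ)).Nonempty ∧
          Module.finrank ℝ (S j).direction = nn 0) ∧
        Set.range (subnet nn W i) ⊆ ⋃ j, (S j : Set (Fin (nn i) → ℝ)) := by
  classical
  suffices H : ∀ i, i ≤ d →
      ∃ (N : ℕ) (S : Fin N → AffineSubspace ℝ (Fin (nn i) → ℝ)),
        (N : ℝ) ≤ ∏ j ∈ Finset.Icc 1 i, (Real.exp 1 * nn j / nn 0) ^ (nn 0) ∧
        (∀ j, (S j : Set (Fin (nn i) → ℝ)).Nonempty ∧
          Module.finrank ℝ (S j).direction = nn 0) ∧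
        Set.range (subnet nn W i) ⊆ ⋃ j, (S j : Set (Fin (nn i) → ℝ)) by
    intro i _ h2
    exact H i h2
  intro i
  induction i with
  | zero =>
      intro _
      refine ⟨1, fun _ => ⊤, ?_, ?_, ?_⟩
      · simp
      · intro j
        refine ⟨⟨0, by simp⟩, ?_⟩
        rw [AffineSubspace.direction_top, finrank_top, Module.finrank_pi]
        simp
      · intro y _
        simp
  | succ i ih =>
      intro hle
      obtain ⟨N, S, hN, hS, hcov⟩ := ih (Nat.le_of_succ_le hle)
      have hkn : nn 0 ≤ nn (i + 1) := hk (i + 1) (by omega) hle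
      -- choose a base point in each affine subspace
      have hp : ∀ j, ∃ q : Fin (nn i) → ℝ, q ∈ S j := fun j => (hS j).1
      choose p hpmem using hp
      -- the functionals describing activation signs on each subspace
      set Ldir : ∀ j : Fin N, Fin (nn (i + 1)) → ((S j).direction) →ₗ[ℝ] ℝ :=
        fun j t => (LinearMap.proj t).comp
          ((Matrix.mulVecLin (W i)).comp (S j).direction.subtype) with hLdir
      set cdir : Fin N → Fin (nn (i + 1)) → ℝ := fun j t => (W i).mulVec (p j) t with hcdir
      set Mb : ℕ := ∑ t ∈ Finset.range (nn 0 + 1), (nn (i + 1)).choose t with hMb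
      have hpats : ∀ j : Fin N,
          ∃ φ : Fin Mb → Finset (Fin (nn (i + 1))),
            ∀ A ∈ pats (Ldir j) (cdir j), ∃ m, φ m = A := by
        intro j
        apply exists_enum _ (Set.toFinite _)
        have hc := pats_card (nn (i + 1)) ((S j).direction) (Ldir j) (cdir j)
        rwa [(hS j).2] at hc
      choose φ hφ using hpats
      -- the truncated weight matrix for an activation pattern
      set DW : Finset (Fin (nn (i + 1))) → Matrix (Fin (nn (i + 1))) (Fin (nn i)) ℝ :=
        fun A => Matrix.of fun t s => if t ∈ A then W i t s else 0 with hDW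
      -- choose a k-dimensional direction containing each image
      have hT : ∀ (A : Finset (Fin (nn (i + 1)))) (j : Fin N),
          ∃ U : Submodule ℝ (Fin (nn (i + 1)) → ℝ),
            ((S j).direction.map (Matrix.mulVecLin (DW A)) ≤ U) ∧
              Module.finrank ℝ U = nn 0 := by
        intro A j
        apply sub_ext
        · calc Module.finrank ℝ ((S j).direction.map (Matrix.mulVecLin (DW A)))
              ≤ Module.finrank ℝ (S j).direction := Submodule.finrank_map_le _ _
            _ = nn 0 := (hS j).2
        · rw [Module.finrank_pi]
          simpa using hkn
      choose U hU1 hU2 using hT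
      refine ⟨N * Mb, fun q => AffineSubspace.mk'
        ((DW (φ (finProdFinEquiv.symm q).1 (finProdFinEquiv.symm q).2)).mulVec
          (p (finProdFinEquiv.symm q).1))
        (U (φ (finProdFinEquiv.symm q).1 (finProdFinEquiv.symm q).2)
          (finProdFinEquiv.symm q).1), ?_, ?_, ?_⟩
      · -- cardinality bound
        rw [Finset.prod_Icc_succ_top (by omega : 1 ≤ i + 1)]
        push_cast
        have h2 : (Mb : ℝ) ≤ (Real.exp 1 * nn (i + 1) / nn 0) ^ (nn 0) := by
          rw [hMb]
          exact sum_choose_le_real _ _ hkn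
        have hprodnn : (0:ℝ) ≤ ∏ j ∈ Finset.Icc 1 i, (Real.exp 1 * nn j / nn 0) ^ (nn 0) :=
          Finset.prod_nonneg fun j _ => by positivity
        exact mul_le_mul hN h2 (Nat.cast_nonneg _) hprodnn
      · -- nonempty and dimension
        intro q
        constructor
        · exact ⟨_, AffineSubspace.self_mem_mk' _ _⟩
        · rw [AffineSubspace.direction_mk']
          exact hU2 _ _
      · -- coverage
        rintro _ ⟨x, rfl⟩
        have hx : subnet nn W i x ∈ ⋃ j, (S j : Set (Fin (nn i) → ℝ)) :=
          hcov ⟨x, rfl⟩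
        rw [Set.mem_iUnion] at hx
        obtain ⟨j, hj⟩ := hx
        have hvmem : subnet nn W i x - p j ∈ (S j).direction := by
          have := AffineSubspace.vsub_mem_direction hj (hpmem j)
          simpa [vsub_eq_sub] using this
        set v : ((S j).direction) := ⟨subnet nn W i x - p j, hvmem⟩ with hvdef
        set A : Finset (Fin (nn (i + 1))) :=
          Finset.univ.filter (fun t => 0 < Ldir j t v + cdir j t) with hA
        have hApat : A ∈ pats (Ldir j) (cdir j) := by
          refine ⟨v, fun t => ?_⟩
          rw [hA]
          simp
        obtain ⟨m, hm⟩ := hφ j A hApat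
        rw [Set.mem_iUnion]
        refine ⟨finProdFinEquiv (j, m), ?_⟩
        rw [AffineSubspace.mem_coe]
        simp only [Equiv.symm_apply_apply]
        rw [hm]
        have hvalsplit : ∀ t, (W i).mulVec (subnet nn W i x) t = Ldir j t v + cdir j t := by
          intro t
          have hsub : (W i).mulVec (subnet nn W i x - p j)
              = (W i).mulVec (subnet nn W i x) - (W i).mulVec (p j) := by
            have := _root_.map_sub (Matrix.mulVecLin (W i)) (subnet nn W i x) (p j)
            simpa [Matrix.mulVecLin_apply] using this
          rw [hLdir, hcdir]
          simp only [LinearMap.comp_apply, Submodule.subtype_apply, LinearMap.proj_apply,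
            Matrix.mulVecLin_apply, hvdef]
          rw [hsub]
          simp
        have hkey : subnet nn W (i + 1) x = (DW A).mulVec (subnet nn W i x) := by
          show reluVec ((W i).mulVec (subnet nn W i x)) = _
          funext t
          by_cases ht : t ∈ A
          · have hpos : 0 < Ldir j t v + cdir j t := by
              rw [hA] at ht
              simpa using ht
            rw [← hvalsplit t] at hpos
            have h1 : reluVec ((W i).mulVec (subnet nn W i x)) t
                = (W i).mulVec (subnet nn W i x) t := max_eq_left hpos.le
            rw [h1]
            rw [hDW]
            simp only [Matrix.mulVec, dotProduct, Matrix.of_apply]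
            apply Finset.sum_congr rfl
            intro s _
            rw [if_pos ht]
          · have hneg : (W i).mulVec (subnet nn W i x) t ≤ 0 := by
              rw [hvalsplit t]
              by_contra h
              push_neg at h
              exact ht (by rw [hA]; simpa using h)
            have h1 : reluVec ((W i).mulVec (subnet nn W i x)) t = 0 := max_eq_right hneg
            rw [h1]
            rw [hDW]
            simp only [Matrix.mulVec, dotProduct, Matrix.of_apply]
            rw [eq_comm]
            apply Finset.sum_eq_zero
            intro s _
            rw [if_neg ht, zero_mul]
        rw [hkey]
        rw [AffineSubspace.mem_mk']
        have hsplit2 : (DW A).mulVec (subnet nn W i x) -ᵥ (DW A).mulVec (p j)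
            = (DW A).mulVec ((v : Fin (nn i) → ℝ)) := by
          have hsub : (DW A).mulVec (subnet nn W i x - p j)
              = (DW A).mulVec (subnet nn W i x) - (DW A).mulVec (p j) := by
            have := _root_.map_sub (Matrix.mulVecLin (DW A)) (subnet nn W i x) (p j)
            simpa [Matrix.mulVecLin_apply] using this
          rw [vsub_eq_sub, ← hsub, hvdef]
        rw [hsplit2]
        apply hU1 A j
        exact Submodule.mem_map.mpr ⟨(v : Fin (nn i) → ℝ), v.2, rfl⟩
end R2WDCFormal
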